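/- Let p_k(A) be the nonbacktracking walk count matrices, with p_0(A) = I. Then p_1(A) = A, p_2(A) = A² − D, and for every k ≥ 2 the four-term recurrence p_{k+1}(A) = p_k(A)·A + p_{k−1}(A)·(I − D) − p_{k−2}(A)·(A − S) holds. -/
import Mathlib


open Matrix Finset

open scoped Classical in
/-- Nonbacktracking walk count matrix: entry `(i,j)` is the number of walks of length `k`
from `i` to `j` that never satisfy `i_s = i_{s+2}`. -/
noncomputable def nbtwCount {n : ℕ} (A : Matrix (Fin n) (Fin n) ℝ) (k : ℕ) :
    Matrix (Fin n) (Fin n) ℝ :=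
  Matrix.of fun i j =>
    ∑ w : Fin (k + 1) → Fin n,
      (let w' : ℕ → Fin n := fun s => w ⟨s % (k + 1), Nat.mod_lt s (Nat.succ_pos k)⟩
       if w' 0 = i ∧ w' k = j ∧ (∀ s ∈ Finset.range k, A (w' s) (w' (s + 1)) = 1) ∧
          (∀ s ∈ Finset.range (k - 1), w' s ≠ w' (s + 2))
       then 1
       else 0)

/-- Diagonal matrix `D` with `d_{ii} = (A²)_{ii}`. -/
noncomputable def degDiag {n : ℕ} (A : Matrix (Fin n) (Fin n) ℝ) : Matrix (Fin n) (Fin n) ℝ :=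
  Matrix.diagonal fun i => (A * A) i i

/-- Matrix `S` with `s_{ij} = a_{ij} a_{ji}`. -/
noncomputable def recipMat {n : ℕ} (A : Matrix (Fin n) (Fin n) ℝ) : Matrix (Fin n) (Fin n) ℝ :=
  Matrix.of fun i j => A i j * A j i

namespace NBT

variable {n : ℕ} (A : Matrix (Fin n) (Fin n) ℝ)

/-- Nonbacktracking walk predicate on `ℕ`-indexed node sequences. -/
def P (k : ℕ) (i j : Fin n) (w : ℕ → Fin n) : Prop :=
  w 0 = i ∧ w k = j ∧ (∀ s < k, A (w s) (w (s + 1)) = 1) ∧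
    ∀ s, s + 2 ≤ k → w s ≠ w (s + 2)

def ext {k : ℕ} (w : Fin (k + 1) → Fin n) : ℕ → Fin n :=
  fun s => w ⟨s % (k + 1), Nat.mod_lt s (Nat.succ_pos k)⟩

lemma ext_apply {k : ℕ} (w : Fin (k + 1) → Fin n) {s : ℕ} (h : s < k + 1) :
    ext w s = w ⟨s, h⟩ := by
  simp only [ext]
  congr 1
  exact Fin.ext (Nat.mod_eq_of_lt h)

lemma P_congr {k : ℕ} {i j : Fin n} {w w' : ℕ → Fin n} (h : ∀ s ≤ k, w s = w' s) :
    P A k i j w ↔ P A k i j w' := by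
  unfold P
  constructor <;> rintro ⟨h0, hk, hE, hN⟩
  · refine ⟨(h 0 (by omega)).symm.trans h0, (h k le_rfl).symm.trans hk, fun s hs => ?_, fun s hs => ?_⟩
    · rw [← h s (by omega), ← h (s + 1) (by omega)]; exact hE s hs
    · rw [← h s (by omega), ← h (s + 2) (by omega)]; exact hN s hs
  · refine ⟨(h 0 (by omega)).trans h0, (h k le_rfl).trans hk, fun s hs => ?_, fun s hs => ?_⟩
    · rw [h s (by omega), h (s + 1) (by omega)]; exact hE s hs
    · rw [h s (by omega), h (s + 2) (by omega)]; exact hN s hs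

lemma P_succ_iff {k : ℕ} {i j : Fin n} {u : ℕ → Fin n} :
    P A (k + 1) i j u ↔
      u (k + 1) = j ∧ P A k i (u k) u ∧ A (u k) j = 1 ∧ ∀ _ : 1 ≤ k, u (k - 1) ≠ j := by
  unfold P
  constructor
  · rintro ⟨h0, hk, hE, hN⟩
    refine ⟨hk, ⟨h0, rfl, fun s hs => hE s (by omega), fun s hs => hN s (by omega)⟩, ?_, ?_⟩
    · have := hE k (by omega); rwa [hk] at this
    · intro h1 hcon
      have h2 : k - 1 + 2 = k + 1 := by omega
      exact hN (k - 1) (by omega) (by rw [h2, hk, hcon])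
  · rintro ⟨hlast, ⟨h0, -, hE, hN⟩, hedge, hnb⟩
    refine ⟨h0, hlast, fun s hs => ?_, fun s hs => ?_⟩
    · rcases Nat.lt_or_ge s k with h | h
      · exact hE s h
      · have : s = k := by omega
        subst this; rw [hlast]; exact hedge
    · rcases Nat.lt_or_ge (s + 2) (k + 1) with h | h
      · exact hN s (by omega)
      · have hs1 : 1 ≤ k := by omega
        have : s = k - 1 := by omega
        subst this
        have h2 : k - 1 + 2 = k + 1 := by omega
        rw [h2, hlast]
        exact hnb hs1

lemma ext_snoc_le {k : ℕ} (v : Fin (k + 1) → Fin n) (x : Fin n) {s : ℕ} (hs : s ≤ k) :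
    ext (Fin.snoc v x) s = ext v s := by
  rw [ext_apply (Fin.snoc v x) (show s < k + 2 by omega), ext_apply v (show s < k + 1 by omega)]
  have : (⟨s, show s < k + 2 by omega⟩ : Fin (k + 2)) = Fin.castSucc ⟨s, show s < k + 1 by omega⟩ := rfl
  rw [this, Fin.snoc_castSucc]

lemma ext_snoc_last {k : ℕ} (v : Fin (k + 1) → Fin n) (x : Fin n) :
    ext (Fin.snoc v x) (k + 1) = x := by
  rw [ext_apply (Fin.snoc v x) (show k + 1 < k + 2 by omega)]
  have : (⟨k + 1, show k + 1 < k + 2 by omega⟩ : Fin (k + 2)) = Fin.last (k + 1) := rfl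
  rw [this, Fin.snoc_last]


open scoped Classical in
noncomputable def p (k : ℕ) (i j : Fin n) : ℝ :=
  ∑ w : Fin (k + 1) → Fin n, if P A k i j (ext w) then 1 else 0

open scoped Classical in
noncomputable def t (k : ℕ) (i m j : Fin n) : ℝ :=
  ∑ w : Fin (k + 2) → Fin n, if P A (k + 1) i j (ext w) ∧ ext w k = m then 1 else 0

def snocEquiv (k : ℕ) : ((Fin (k + 1) → Fin n) × Fin n) ≃ (Fin (k + 2) → Fin n) where
  toFun q := Fin.snoc q.1 q.2
  invFun w := (Fin.init w, w (Fin.last (k + 1)))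
  left_inv q := by simp
  right_inv w := by simp

lemma sum_snoc (k : ℕ) (f : (Fin (k + 2) → Fin n) → ℝ) :
    ∑ w : Fin (k + 2) → Fin n, f w
      = ∑ v : Fin (k + 1) → Fin n, ∑ x : Fin n, f (Fin.snoc v x) := by
  calc ∑ w : Fin (k + 2) → Fin n, f w
      = ∑ q : (Fin (k + 1) → Fin n) × Fin n, f (Fin.snoc q.1 q.2) :=
        ((snocEquiv (n := n) k).sum_comp f).symm
    _ = _ := Fintype.sum_prod_type _


lemma P_ext_snoc_iff {k : ℕ} (v : Fin (k + 1) → Fin n) (x : Fin n) {i j : Fin n} :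
    P A (k + 1) i j (ext (Fin.snoc v x)) ↔
      x = j ∧ P A k i (ext v k) (ext v) ∧ A (ext v k) j = 1 ∧
        ∀ _ : 1 ≤ k, ext v (k - 1) ≠ j := by
  rw [P_succ_iff, ext_snoc_last, ext_snoc_le v x (le_refl k)]
  constructor
  · rintro ⟨h1, h2, h3, h4⟩
    refine ⟨h1, ?_, h3, fun h5 => ?_⟩
    · exact (P_congr A fun s hs => ext_snoc_le v x hs).mp h2
    · rw [← ext_snoc_le v x (show k - 1 ≤ k by omega)]; exact h4 h5
  · rintro ⟨h1, h2, h3, h4⟩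
    refine ⟨h1, ?_, h3, fun h5 => ?_⟩
    · exact (P_congr A fun s hs => ext_snoc_le v x hs).mpr h2
    · rw [ext_snoc_le v x (show k - 1 ≤ k by omega)]; exact h4 h5

/-- endpoint rewriting for P -/
lemma P_endpoint {k : ℕ} {i m : Fin n} {w : ℕ → Fin n} :
    P A k i m w ↔ (P A k i (w k) w ∧ w k = m) := by
  unfold P
  constructor
  · rintro ⟨h0, hk, hE, hN⟩; exact ⟨⟨h0, rfl, hE, hN⟩, hk⟩
  · rintro ⟨⟨h0, -, hE, hN⟩, hk⟩; exact ⟨h0, hk, hE, hN⟩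

open scoped Classical in
lemma p_succ (k : ℕ) (i j : Fin n) : p A (k + 1) i j = ∑ m, t A k i m j := by
  unfold p t
  rw [Finset.sum_comm]
  apply Finset.sum_congr rfl
  intro w _
  by_cases h : P A (k + 1) i j (ext w) <;> simp [h, Finset.sum_ite_eq]

open scoped Classical in
lemma t_edge (hA01 : ∀ i j, A i j = 0 ∨ A i j = 1) (k : ℕ) (i m j : Fin n) :
    t A k i m j * A m j = t A k i m j := by
  rcases hA01 m j with h | h
  · rw [h, mul_zero]
    symm
    apply Finset.sum_eq_zero
    intro w _
    rw [if_neg]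
    rintro ⟨⟨-, hlast, hE, -⟩, hm⟩
    have he := hE k (by omega)
    rw [hm, hlast, h] at he
    norm_num at he
  · rw [h, mul_one]

open scoped Classical in
lemma t_zero_eq (hA01 : ∀ i j, A i j = 0 ∨ A i j = 1) (i m j : Fin n) :
    t A 0 i m j = (if m = i then 1 else 0) * A i j := by
  unfold t
  rw [sum_snoc]
  have step1 : ∀ v : Fin 1 → Fin n,
      (∑ x : Fin n, if P A 1 i j (ext (Fin.snoc v x)) ∧ ext (Fin.snoc v x) 0 = m
        then (1:ℝ) else 0)
      = if (ext v 0 = i ∧ A (ext v 0) j = 1 ∧ ext v 0 = m) then 1 else 0 := by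
    intro v
    have hcond : ∀ x : Fin n,
        (P A 1 i j (ext (Fin.snoc v x)) ∧ ext (Fin.snoc v x) 0 = m) ↔
        (x = j ∧ (ext v 0 = i ∧ A (ext v 0) j = 1 ∧ ext v 0 = m)) := by
      intro x
      rw [ext_snoc_le v x (le_refl 0), P_ext_snoc_iff]
      constructor
      · rintro ⟨⟨h1, ⟨h2, -, -, -⟩, h3, -⟩, h4⟩
        exact ⟨h1, h2, h3, h4⟩
      · rintro ⟨h1, h2, h3, h4⟩
        exact ⟨⟨h1, ⟨h2, rfl, fun s hs => by omega, fun s hs => by omega⟩, h3,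
          fun h5 => by omega⟩, h4⟩
    simp only [hcond]
    by_cases hC : ext v 0 = i ∧ A (ext v 0) j = 1 ∧ ext v 0 = m
    · rw [if_pos hC]
      rw [Finset.sum_congr rfl fun x _ => if_congr (and_iff_left hC) rfl rfl]
      simp
    · rw [if_neg hC]
      apply Finset.sum_eq_zero
      intro x _
      rw [if_neg]
      rintro ⟨-, h⟩
      exact hC h
  rw [Finset.sum_congr rfl fun v _ => step1 v]
  rw [← ((Equiv.funUnique (Fin 1) (Fin n)).symm.sum_comp
    (fun v => if (ext v 0 = i ∧ A (ext v 0) j = 1 ∧ ext v 0 = m) then (1:ℝ) else 0))]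
  have hext : ∀ c : Fin n, ext ((Equiv.funUnique (Fin 1) (Fin n)).symm c) 0 = c := by
    intro c; rw [ext_apply _ (show 0 < 1 by omega)]; rfl
  simp only [hext]
  by_cases him : m = i
  · subst him
    rw [if_pos rfl, one_mul]
    rcases hA01 m j with h | h
    · rw [h]
      apply Finset.sum_eq_zero
      intro c _
      rw [if_neg]
      rintro ⟨h1, h2, -⟩
      rw [h1, h] at h2
      norm_num at h2
    · rw [h]
      rw [Finset.sum_eq_single m]
      · rw [if_pos ⟨rfl, by rw [h], rfl⟩]
      · intro c _ hc; rw [if_neg]; rintro ⟨h1, -, -⟩; exact hc h1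
      · intro habs; exact absurd (Finset.mem_univ m) habs
  · rw [if_neg him, zero_mul]
    apply Finset.sum_eq_zero
    intro c _
    rw [if_neg]; rintro ⟨h1, -, h3⟩; exact him (h3.symm.trans h1)


open scoped Classical in
lemma t_succ (hA01 : ∀ i j, A i j = 0 ∨ A i j = 1) (l : ℕ) (i m j : Fin n) :
    t A (l + 1) i m j = A m j * (p A (l + 1) i m - t A l i j m) := by
  unfold t p
  rw [sum_snoc]
  have step1 : ∀ v : Fin (l + 2) → Fin n,
      (∑ x : Fin n, if P A (l + 1 + 1) i j (ext (Fin.snoc v x)) ∧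
          ext (Fin.snoc v x) (l + 1) = m then (1:ℝ) else 0)
      = if (P A (l + 1) i m (ext v) ∧ A m j = 1 ∧ ext v l ≠ j) then 1 else 0 := by
    intro v
    have hcond : ∀ x : Fin n,
        (P A (l + 1 + 1) i j (ext (Fin.snoc v x)) ∧ ext (Fin.snoc v x) (l + 1) = m) ↔
        (x = j ∧ (P A (l + 1) i m (ext v) ∧ A m j = 1 ∧ ext v l ≠ j)) := by
      intro x
      rw [ext_snoc_le v x (le_refl (l + 1)), P_ext_snoc_iff]
      constructor
      · rintro ⟨⟨hx, hP, hA, hnb⟩, hm⟩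
        refine ⟨hx, (P_endpoint A).mpr ⟨hP, hm⟩, by rw [← hm]; exact hA, ?_⟩
        exact hnb (by omega)
      · rintro ⟨hx, hP, hA, hnb⟩
        have h' := (P_endpoint A).mp hP
        exact ⟨⟨hx, h'.1, by rw [h'.2]; exact hA, fun _ => hnb⟩, h'.2⟩
    simp only [hcond]
    by_cases hC : P A (l + 1) i m (ext v) ∧ A m j = 1 ∧ ext v l ≠ j
    · rw [if_pos hC]
      rw [Finset.sum_congr rfl fun x _ => if_congr (and_iff_left hC) rfl rfl]
      simp
    · rw [if_neg hC]
      apply Finset.sum_eq_zero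
      intro x _
      rw [if_neg]
      rintro ⟨-, h⟩
      exact hC h
  rw [Finset.sum_congr rfl fun v _ => step1 v]
  have step2 : ∀ v : Fin (l + 2) → Fin n,
      (if (P A (l + 1) i m (ext v) ∧ A m j = 1 ∧ ext v l ≠ j) then (1:ℝ) else 0)
      = A m j * ((if P A (l + 1) i m (ext v) then (1:ℝ) else 0)
          - (if P A (l + 1) i m (ext v) ∧ ext v l = j then (1:ℝ) else 0)) := by
    intro v
    rcases hA01 m j with h | h
    · rw [h, zero_mul, if_neg]
      rintro ⟨-, h2, -⟩
      exact absurd h2 (by norm_num)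
    · rw [h, one_mul]
      by_cases hP : P A (l + 1) i m (ext v)
      · by_cases hl : ext v l = j
        · rw [if_neg (by rintro ⟨-, -, hc⟩; exact hc hl), if_pos hP, if_pos ⟨hP, hl⟩]
          ring
        · rw [if_pos ⟨hP, rfl, hl⟩, if_pos hP, if_neg (by rintro ⟨-, hc⟩; exact hl hc)]
          ring
      · simp [hP]
  rw [Finset.sum_congr rfl fun v _ => step2 v, ← Finset.mul_sum, Finset.sum_sub_distrib]

lemma P_zero_iff {i j : Fin n} {w : ℕ → Fin n} :
    P A 0 i j w ↔ (w 0 = i ∧ w 0 = j) := by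
  unfold P
  constructor
  · rintro ⟨a, b, -, -⟩; exact ⟨a, b⟩
  · rintro ⟨a, b⟩; exact ⟨a, b, fun s hs => by omega, fun s hs => by omega⟩

open scoped Classical in
lemma p_zero (i j : Fin n) : p A 0 i j = if i = j then 1 else 0 := by
  unfold p
  rw [← ((Equiv.funUnique (Fin 1) (Fin n)).symm.sum_comp
    (fun w => if P A 0 i j (ext w) then (1:ℝ) else 0))]
  have hext : ∀ c : Fin n, ext ((Equiv.funUnique (Fin 1) (Fin n)).symm c) 0 = c := by
    intro c; rw [ext_apply _ (show 0 < 1 by omega)]; rfl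
  have hc : ∀ c : Fin n, P A 0 i j (ext ((Equiv.funUnique (Fin 1) (Fin n)).symm c)) ↔
      (c = i ∧ c = j) := by
    intro c
    rw [P_zero_iff, hext c]
  rw [Finset.sum_congr rfl fun c _ => if_congr (hc c) rfl rfl]
  by_cases h : i = j
  · subst h
    rw [if_pos rfl, Finset.sum_eq_single i]
    · rw [if_pos ⟨rfl, rfl⟩]
    · intro c _ hci; rw [if_neg]; rintro ⟨h1, -⟩; exact hci h1
    · intro habs; exact absurd (Finset.mem_univ i) habs
  · rw [if_neg h]
    apply Finset.sum_eq_zero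
    intro c _
    rw [if_neg]
    rintro ⟨h1, h2⟩
    exact h (h1.symm.trans h2)

lemma p_one (hA01 : ∀ i j, A i j = 0 ∨ A i j = 1) (i j : Fin n) : p A 1 i j = A i j := by
  rw [p_succ, Finset.sum_congr rfl fun m _ => t_zero_eq A hA01 i m j]
  rw [Finset.sum_eq_single i]
  · rw [if_pos rfl, one_mul]
  · intro c _ hci; rw [if_neg hci, zero_mul]
  · intro habs; exact absurd (Finset.mem_univ i) habs

lemma t_zero_eq' (hA01 : ∀ i j, A i j = 0 ∨ A i j = 1) (i m j : Fin n) :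
    t A 0 i m j = A m j * p A 0 i m := by
  rw [t_zero_eq A hA01, p_zero]
  by_cases h : m = i
  · subst h; simp [mul_comm]
  · rw [if_neg h, if_neg fun hh => h hh.symm]; ring

lemma t_key (hA01 : ∀ i j, A i j = 0 ∨ A i j = 1) (l : ℕ) (i m j : Fin n) :
    (1 - A j m) * t A l i m j = (1 - A j m) * (A m j * p A l i m) := by
  cases l with
  | zero => rw [t_zero_eq' A hA01]
  | succ q =>
    rw [t_succ A hA01 q i m j]
    have h4 : t A q i j m * A j m = t A q i j m := t_edge A hA01 q i j m
    have h0 : (1 - A j m) * t A q i j m = 0 := by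
      rw [sub_mul, one_mul, mul_comm, h4, sub_self]
    linear_combination (-(A m j)) * h0

lemma p_rec (hA01 : ∀ i j, A i j = 0 ∨ A i j = 1) (l : ℕ) (i j : Fin n) :
    p A (l + 3) i j =
      (∑ m, p A (l + 2) i m * A m j)
        + (p A (l + 1) i j - p A (l + 1) i j * (∑ m, A j m * A m j))
        - (∑ m, p A l i m * (A m j - A m j * A j m)) := by
  have per_m : ∀ m, t A (l + 2) i m j =
      p A (l + 2) i m * A m j - p A (l + 1) i j * (A j m * A m j) + t A l i m j
        - p A l i m * (A m j - A m j * A j m) := by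
    intro m
    have h1 := t_succ A hA01 (l + 1) i m j
    have h2 := t_succ A hA01 l i j m
    have h3 := t_key A hA01 l i m j
    have h4 := t_edge A hA01 l i m j
    linear_combination h1 - A m j * h2 - h3 + A j m * h4
  have hps : p A (l + 3) i j = ∑ m, t A (l + 2) i m j := p_succ A (l + 2) i j
  rw [hps, Finset.sum_congr rfl fun m _ => per_m m]
  rw [Finset.sum_sub_distrib, Finset.sum_add_distrib, Finset.sum_sub_distrib,
    ← Finset.mul_sum, ← p_succ]
  ring


lemma p_two (hA01 : ∀ i j, A i j = 0 ∨ A i j = 1) (i j : Fin n) :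
    p A 2 i j = (∑ m, A i m * A m j) - (if i = j then ∑ m, A i m * A m i else 0) := by
  rw [show (2:ℕ) = 1 + 1 from rfl, p_succ]
  have e : ∀ m : Fin n, t A 1 i m j =
      A m j * (A i m - A j m * (if i = j then 1 else 0)) := by
    intro m
    rw [t_succ A hA01 0 i m j, p_one A hA01, t_zero_eq' A hA01, p_zero]
  rw [Finset.sum_congr rfl fun m _ => e m]
  by_cases h : i = j
  · subst h
    rw [if_pos rfl, if_pos rfl, sub_self]
    apply Finset.sum_eq_zero
    intro m _
    ring
  · rw [if_neg h, if_neg h, sub_zero]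
    apply Finset.sum_congr rfl
    intro m _
    ring

open scoped Classical in
lemma nbtwCount_eq (k : ℕ) (i j : Fin n) : nbtwCount A k i j = p A k i j := by
  unfold nbtwCount p
  simp only [Matrix.of_apply]
  apply Finset.sum_congr rfl
  intro w _
  show (if (ext w 0 = i ∧ ext w k = j ∧ (∀ s ∈ Finset.range k, A (ext w s) (ext w (s + 1)) = 1) ∧
      ∀ s ∈ Finset.range (k - 1), ext w s ≠ ext w (s + 2)) then (1:ℝ) else 0)
    = if P A k i j (ext w) then 1 else 0
  have hiff : (ext w 0 = i ∧ ext w k = j ∧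
      (∀ s ∈ Finset.range k, A (ext w s) (ext w (s + 1)) = 1) ∧
      ∀ s ∈ Finset.range (k - 1), ext w s ≠ ext w (s + 2)) ↔ P A k i j (ext w) := by
    unfold P
    simp only [Finset.mem_range]
    constructor
    · rintro ⟨a, b, c, d⟩
      exact ⟨a, b, fun s hs => c s hs, fun s hs => d s (by omega)⟩
    · rintro ⟨a, b, c, d⟩
      exact ⟨a, b, fun s hs => c s hs, fun s hs => d s (by omega)⟩
  simp only [hiff]

end NBT

/-- The four-term recurrence for nonbacktracking walk counts. -/
theorem nbtw_recurrence {n : ℕ} (hn : 1 ≤ n) (A : Matrix (Fin n) (Fin n) ℝ)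
    (hA01 : ∀ i j, A i j = 0 ∨ A i j = 1) (hAdiag : ∀ i, A i i = 0) :
    nbtwCount A 0 = 1 ∧
    nbtwCount A 1 = A ∧
    nbtwCount A 2 = A * A - degDiag A ∧
    ∀ k, 2 ≤ k →
      nbtwCount A (k + 1) =
        nbtwCount A k * A + nbtwCount A (k - 1) * (1 - degDiag A) -
          nbtwCount A (k - 2) * (A - recipMat A) := by
  refine ⟨?_, ?_, ?_, ?_⟩
  · ext i j
    rw [NBT.nbtwCount_eq, NBT.p_zero, Matrix.one_apply]
  · ext i j
    rw [NBT.nbtwCount_eq, NBT.p_one A hA01]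
  · ext i j
    rw [NBT.nbtwCount_eq, NBT.p_two A hA01, Matrix.sub_apply, Matrix.mul_apply]
    congr 1
  · intro k hk
    obtain ⟨l, rfl⟩ : ∃ l, k = l + 2 := ⟨k - 2, by omega⟩
    have e1 : l + 2 - 1 = l + 1 := by omega
    have e2 : l + 2 - 2 = l := by omega
    have e3 : l + 2 + 1 = l + 3 := by omega
    rw [e1, e2, e3]
    ext i j
    unfold degDiag recipMat
    simp only [NBT.nbtwCount_eq, Matrix.sub_apply, Matrix.add_apply, Matrix.mul_apply,
      Matrix.one_apply, Matrix.diagonal_apply, Matrix.of_apply]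
    have mid : ∑ x, NBT.p A (l + 1) i x *
        ((if x = j then (1:ℝ) else 0) - (if x = j then (∑ y, A x y * A y x) else 0))
        = NBT.p A (l + 1) i j - NBT.p A (l + 1) i j * (∑ y, A j y * A y j) := by
      rw [Finset.sum_eq_single j]
      · rw [if_pos rfl, if_pos rfl]
        ring
      · intro x _ hx
        rw [if_neg hx, if_neg hx]
        ring
      · intro habs
        exact absurd (Finset.mem_univ j) habs
    rw [mid, NBT.p_rec A hA01 l i j]
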